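/- The Ramsey number R(W_5, W_7) is at least 15; that is, there exists a red-blue edge-coloring of K_14 with no red W_5 and no blue W_7. -/

import Mathlib

open SimpleGraph

/-- `H` is contained in `G` as a subgraph. -/
def Contains {α β : Type*} (G : SimpleGraph α) (H : SimpleGraph β) : Prop :=
  ∃ f : H →g G, Function.Injective f

/-- Every red/blue coloring of `K_N` (red = `C`, blue = `Cᶜ`) has a red `G` or blue `H`. -/
def RamseyProp {α β : Type*} (N : ℕ) (G : SimpleGraph α) (H : SimpleGraph β) : Prop :=
  ∀ C : SimpleGraph (Fin N), Contains C G ∨ Contains Cᶜ H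

/-- The Ramsey number `R(G, H)`. -/
noncomputable def ramseyNumber {α β : Type*} (G : SimpleGraph α) (H : SimpleGraph β) : ℕ :=
  sInf {N | RamseyProp N G H}

/-- The join `G + H`: disjoint union plus all edges in between. -/
def graphJoin {α β : Type*} (G : SimpleGraph α) (H : SimpleGraph β) : SimpleGraph (α ⊕ β) :=
  SimpleGraph.fromRel (fun x y =>
    match x, y with
    | Sum.inl a, Sum.inl b => G.Adj a b
    | Sum.inr a, Sum.inr b => H.Adj a b
    | _, _ => True)

/-- The wheel `W_n = K_1 + C_{n-1}` on `n` vertices. -/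
def wheel (n : ℕ) : SimpleGraph (Fin 1 ⊕ Fin (n - 1)) :=
  graphJoin ⊥ (SimpleGraph.cycleGraph (n - 1))

/-- A perfect matching `k • K_2` on `2k` vertices. -/
def matching (k : ℕ) : SimpleGraph (Fin k × Fin 2) :=
  SimpleGraph.fromRel (fun x y => x.1 = y.1)

/-- The fan `F_k = K_1 + k • K_2`. -/
def fan (k : ℕ) : SimpleGraph (Fin 1 ⊕ Fin k × Fin 2) :=
  graphJoin ⊥ (matching k)

/-- The kipas `K̂_n = K_1 + P_{n-1}` on `n` vertices. -/
def kipas (n : ℕ) : SimpleGraph (Fin 1 ⊕ Fin (n - 1)) :=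
  graphJoin ⊥ (SimpleGraph.pathGraph (n - 1))

/-- The blow-up `G[K_2]`: each vertex replaced by an adjacent pair; vertices in
different pairs adjacent iff the original vertices are adjacent. -/
def blowUp {α : Type*} (G : SimpleGraph α) : SimpleGraph (α × Fin 2) :=
  SimpleGraph.fromRel (fun x y => x.1 = y.1 ∨ G.Adj x.1 y.1)


/-! ### The explicit coloring on 14 vertices -/

def rr (x y : Fin 14) : Prop :=
  x.val / 2 = y.val / 2 ∨ (x.val / 2 + 1) % 7 = y.val / 2 ∨
    (1 ≤ x.val / 2 ∧ x.val / 2 ≤ 3 ∧ x.val / 2 + 3 = y.val / 2)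

instance : DecidableRel rr := fun x y => by unfold rr; infer_instance

def myC : SimpleGraph (Fin 14) := SimpleGraph.fromRel rr

instance : DecidableRel myC.Adj :=
  fun x y => decidable_of_iff' _ (SimpleGraph.fromRel_adj rr x y)

instance : DecidableRel (myCᶜ.Adj) :=
  fun x y => decidable_of_iff' _ (SimpleGraph.compl_adj myC x y)

/-! ### Wheel adjacency facts -/

lemma wheel_adj_hub {n : ℕ} (i : Fin (n - 1)) :
    (wheel n).Adj (Sum.inl 0) (Sum.inr i) := by
  unfold wheel graphJoin
  rw [SimpleGraph.fromRel_adj]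
  exact ⟨Sum.inl_ne_inr, Or.inl trivial⟩

lemma wheel_adj_rim {n : ℕ} {i j : Fin (n - 1)}
    (h : (SimpleGraph.cycleGraph (n - 1)).Adj i j) :
    (wheel n).Adj (Sum.inr i) (Sum.inr j) := by
  unfold wheel graphJoin
  rw [SimpleGraph.fromRel_adj]
  exact ⟨by simpa using h.ne, Or.inl h⟩

/-! ### The coloring has no red `W₅` and no blue `W₇` -/

set_option synthInstance.maxSize 4000 in
set_option synthInstance.maxHeartbeats 2000000 in
set_option maxHeartbeats 10000000 in
set_option maxRecDepth 100000 in
lemma no_red_W5 : ¬ Contains myC (wheel 5) := by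
  rintro ⟨f, hf⟩
  have key : ∃ h a : Fin 14, myC.Adj h a ∧ ∃ b, myC.Adj h b ∧ myC.Adj a b ∧
      ∃ c, c ≠ a ∧ myC.Adj h c ∧ myC.Adj b c ∧
      ∃ d, d ≠ b ∧ myC.Adj h d ∧ myC.Adj c d ∧ myC.Adj d a := by
    refine ⟨f (Sum.inl 0), f (Sum.inr 0),
      f.map_adj (wheel_adj_hub 0), f (Sum.inr 1),
      f.map_adj (wheel_adj_hub 1),
      f.map_adj (wheel_adj_rim (by decide)), f (Sum.inr 2),
      fun hh => absurd (hf hh) (by decide),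
      f.map_adj (wheel_adj_hub 2),
      f.map_adj (wheel_adj_rim (by decide)), f (Sum.inr 3),
      fun hh => absurd (hf hh) (by decide),
      f.map_adj (wheel_adj_hub 3),
      f.map_adj (wheel_adj_rim (by decide)),
      f.map_adj (wheel_adj_rim (by decide))⟩
  exact absurd key (by decide)

set_option synthInstance.maxSize 4000 in
set_option synthInstance.maxHeartbeats 2000000 in
set_option maxHeartbeats 10000000 in
set_option maxRecDepth 100000 in
lemma no_blue_W7 : ¬ Contains myCᶜ (wheel 7) := by
  rintro ⟨f, hf⟩
  have key : ∃ h a : Fin 14, myCᶜ.Adj h a ∧ ∃ b, myCᶜ.Adj a b ∧ myCᶜ.Adj h b ∧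
      ∃ c, myCᶜ.Adj b c ∧ c ≠ a ∧ myCᶜ.Adj h c ∧
      ∃ d, myCᶜ.Adj c d ∧ d ≠ b ∧ d ≠ a ∧ myCᶜ.Adj h d ∧
      ∃ e, myCᶜ.Adj d e ∧ e ≠ c ∧ e ≠ b ∧ e ≠ a ∧ myCᶜ.Adj h e ∧
      ∃ g, myCᶜ.Adj e g ∧ myCᶜ.Adj g a ∧ g ≠ d ∧ g ≠ c ∧ g ≠ b ∧ myCᶜ.Adj h g := by
    refine ⟨f (Sum.inl 0), f (Sum.inr 0),
      f.map_adj (wheel_adj_hub 0), f (Sum.inr 1),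
      f.map_adj (wheel_adj_rim (by decide)),
      f.map_adj (wheel_adj_hub 1), f (Sum.inr 2),
      f.map_adj (wheel_adj_rim (by decide)),
      fun hh => absurd (hf hh) (by decide),
      f.map_adj (wheel_adj_hub 2), f (Sum.inr 3),
      f.map_adj (wheel_adj_rim (by decide)),
      fun hh => absurd (hf hh) (by decide),
      fun hh => absurd (hf hh) (by decide),
      f.map_adj (wheel_adj_hub 3), f (Sum.inr 4),
      f.map_adj (wheel_adj_rim (by decide)),
      fun hh => absurd (hf hh) (by decide),
      fun hh => absurd (hf hh) (by decide),
      fun hh => absurd (hf hh) (by decide),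
      f.map_adj (wheel_adj_hub 4), f (Sum.inr 5),
      f.map_adj (wheel_adj_rim (by decide)),
      f.map_adj (wheel_adj_rim (by decide)),
      fun hh => absurd (hf hh) (by decide),
      fun hh => absurd (hf hh) (by decide),
      fun hh => absurd (hf hh) (by decide),
      f.map_adj (wheel_adj_hub 5)⟩
  exact absurd key (by decide)

/-! ### Existence of some Ramsey bound (so that the `sInf` is over a nonempty set) -/

lemma greedy {V : Type*} [DecidableEq V] (C : SimpleGraph V) :
    ∀ (k : ℕ) (s : Finset V), 2 ^ k ≤ s.card →
      ∃ (f : Fin k → V) (cl : Fin k → Bool), Function.Injective f ∧ (∀ i, f i ∈ s) ∧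
        ∀ i j : Fin k, i < j →
          ((cl i = true → C.Adj (f i) (f j)) ∧ (cl i = false → ¬ C.Adj (f i) (f j))) := by
  intro k
  induction k with
  | zero =>
      intro s _
      exact ⟨Fin.elim0, Fin.elim0, fun i => i.elim0, fun i => i.elim0, fun i => i.elim0⟩
  | succ k ih =>
      intro s hs
      classical
      have hpow : 0 < 2 ^ (k + 1) := Nat.pow_pos (by norm_num)
      have hpos : 0 < s.card := lt_of_lt_of_le hpow hs
      obtain ⟨x, hx⟩ := Finset.card_pos.mp hpos
      have hsum : ((s.erase x).filter (fun y => C.Adj x y)).card +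
          ((s.erase x).filter (fun y => ¬ C.Adj x y)).card = (s.erase x).card :=
        Finset.card_filter_add_card_filter_not _
      have herase : (s.erase x).card = s.card - 1 := Finset.card_erase_of_mem hx
      have hbig : 2 ^ k ≤ ((s.erase x).filter (fun y => C.Adj x y)).card ∨
          2 ^ k ≤ ((s.erase x).filter (fun y => ¬ C.Adj x y)).card := by
        by_contra hcon
        push_neg at hcon
        rw [pow_succ] at hs
        omega
      obtain ⟨b, t, htc, htsub, hadjt⟩ :
          ∃ (b : Bool) (t : Finset V), 2 ^ k ≤ t.card ∧ t ⊆ s.erase x ∧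
            ∀ y ∈ t, (b = true → C.Adj x y) ∧ (b = false → ¬ C.Adj x y) := by
        rcases hbig with h | h
        · exact ⟨true, _, h, Finset.filter_subset _ _,
            fun y hy => ⟨fun _ => (Finset.mem_filter.mp hy).2, fun hb => by simp at hb⟩⟩
        · exact ⟨false, _, h, Finset.filter_subset _ _,
            fun y hy => ⟨fun hb => by simp at hb, fun _ => (Finset.mem_filter.mp hy).2⟩⟩
      obtain ⟨f', cl', hinj', hmem', hpair'⟩ := ih t htc
      have hne : ∀ i, f' i ≠ x := fun i => Finset.ne_of_mem_erase (htsub (hmem' i))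
      refine ⟨Fin.cases x f', Fin.cases b cl', ?_, ?_, ?_⟩
      · intro i j hij
        induction i using Fin.cases with
        | zero =>
            induction j using Fin.cases with
            | zero => rfl
            | succ j =>
                simp only [Fin.cases_zero, Fin.cases_succ] at hij
                exact absurd hij.symm (hne j)
        | succ i =>
            induction j using Fin.cases with
            | zero =>
                simp only [Fin.cases_zero, Fin.cases_succ] at hij
                exact absurd hij (hne i)
            | succ j =>
                simp only [Fin.cases_succ] at hij
                exact congrArg Fin.succ (hinj' hij)
      · intro i
        induction i using Fin.cases with
        | zero => simpa using hx
        | succ i =>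
            simpa using Finset.mem_of_mem_erase (htsub (hmem' i))
      · intro i j hlt
        induction i using Fin.cases with
        | zero =>
            induction j using Fin.cases with
            | zero => exact absurd hlt (lt_irrefl _)
            | succ j =>
                simp only [Fin.cases_zero, Fin.cases_succ]
                exact hadjt _ (hmem' j)
        | succ i =>
            induction j using Fin.cases with
            | zero => exact absurd hlt (by simp [Fin.lt_def])
            | succ j =>
                simp only [Fin.cases_succ]
                exact hpair' i j (by simpa [Fin.succ_lt_succ_iff] using hlt)

lemma contains_of_clique {V β : Type*} [Fintype β] {C : SimpleGraph V} {H : SimpleGraph β}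
    (g : Fin 7 → V) (hg : Function.Injective g)
    (hcl : ∀ i j, i ≠ j → C.Adj (g i) (g j)) (hcard : Fintype.card β ≤ 7) :
    Contains C H := by
  obtain ⟨e⟩ := Function.Embedding.nonempty_of_card_le (α := β) (β := Fin 7) (by simpa using hcard)
  exact ⟨⟨fun x => g (e x), fun {a b} hab => hcl _ _ (fun hh => hab.ne (e.injective hh))⟩,
    hg.comp e.injective⟩

lemma ramsey_8192 : RamseyProp 8192 (wheel 5) (wheel 7) := by
  intro C
  obtain ⟨f, cl, hinj, -, hprop⟩ := greedy C 13 Finset.univ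
    (by rw [Finset.card_univ, Fintype.card_fin]; norm_num)
  have h13 : (Finset.univ.filter (fun i : Fin 13 => cl i = true)).card +
      (Finset.univ.filter (fun i : Fin 13 => cl i = false)).card = 13 := by
    have h := Finset.card_filter_add_card_filter_not
      (s := (Finset.univ : Finset (Fin 13))) (p := fun i => cl i = true)
    simpa using h
  have hb : ∃ b : Bool, 7 ≤ (Finset.univ.filter (fun i : Fin 13 => cl i = b)).card := by
    by_contra hcon
    push_neg at hcon
    have h1 := hcon true
    have h2 := hcon false
    omega
  obtain ⟨b, hb⟩ := hb
  obtain ⟨u, hu, huc⟩ := Finset.exists_subset_card_eq hb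
  set emb := u.orderEmbOfFin huc with hemb
  have hclb : ∀ i : Fin 7, cl (emb i) = b := fun i =>
    (Finset.mem_filter.mp (hu (Finset.orderEmbOfFin_mem u huc i))).2
  set g : Fin 7 → Fin 8192 := fun i => f (emb i) with hg
  have hginj : Function.Injective g := hinj.comp emb.injective
  cases b with
  | true =>
      left
      refine contains_of_clique g hginj ?_ (by simp)
      intro i j hij
      rcases lt_or_gt_of_ne hij with h | h
      · exact (hprop _ _ (emb.strictMono h)).1 (hclb i)
      · exact ((hprop _ _ (emb.strictMono h)).1 (hclb j)).symm
  | false =>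
      right
      refine contains_of_clique g hginj ?_ (by simp)
      intro i j hij
      rw [SimpleGraph.compl_adj]
      refine ⟨fun hh => hij (hginj hh), ?_⟩
      rcases lt_or_gt_of_ne hij with h | h
      · exact (hprop _ _ (emb.strictMono h)).2 (hclb i)
      · exact fun ha => (hprop _ _ (emb.strictMono h)).2 (hclb j) ha.symm

/-! ### Monotonicity of `RamseyProp` -/

lemma ramsey_mono {α β : Type*} {G : SimpleGraph α} {H : SimpleGraph β} {N M : ℕ}
    (hNM : N ≤ M) (hR : RamseyProp N G H) : RamseyProp M G H := by
  intro C
  have hinj : Function.Injective (Fin.castLE hNM) := Fin.castLE_injective hNM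
  rcases hR (C.comap (Fin.castLE hNM)) with ⟨f, hf⟩ | ⟨f, hf⟩
  · exact Or.inl ⟨⟨fun x => Fin.castLE hNM (f x), fun {a b} hab => f.map_adj hab⟩,
      hinj.comp hf⟩
  · refine Or.inr ⟨⟨fun x => Fin.castLE hNM (f x), fun {a b} hab => ?_⟩, hinj.comp hf⟩
    have h2 := f.map_adj hab
    rw [SimpleGraph.compl_adj] at h2 ⊢
    exact ⟨fun hh => h2.1 (hinj hh), h2.2⟩

theorem stmt_3 :
    15 ≤ ramseyNumber (wheel 5) (wheel 7) ∧
    ∃ C : SimpleGraph (Fin 14), ¬ Contains C (wheel 5) ∧ ¬ Contains Cᶜ (wheel 7) := by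
  refine ⟨?_, ⟨myC, no_red_W5, no_blue_W7⟩⟩
  have hne : {N | RamseyProp N (wheel 5) (wheel 7)}.Nonempty := ⟨8192, ramsey_8192⟩
  have hmem := Nat.sInf_mem hne
  by_contra hcon
  push_neg at hcon
  unfold ramseyNumber at hcon
  have h14 : RamseyProp 14 (wheel 5) (wheel 7) :=
    ramsey_mono (by omega) hmem
  rcases h14 myC with hc | hc
  · exact no_red_W5 hc
  · exact no_blue_W7 hc
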